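/- For all integers n, i, k with 1 ≤ i ≤ n-1 and k ≥ 0: Σ_{j=k}^{⌊n/2⌋} C(j,k)·[C(n-i,j)·C(i-1,i-j) - C(n-i-1,j)·C(i,i+1-j)] = C(n-i,k)·C(n-k-1,i-k) - C(n-i-1,k)·C(n-k-1,i+1-k). -/

import Mathlib

/-- The binomial coefficient `C(a,b)` for integer arguments, with the convention that
`C(a,b) = 0` unless `0 ≤ b ≤ a`. -/
def Cb (a b : ℤ) : ℚ :=
  if 0 ≤ b ∧ b ≤ a then (a.toNat.choose b.toNat : ℚ) else 0

lemma cb_zero {a b : ℤ} (h : b < 0 ∨ a < b) : Cb a b = 0 := by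
  unfold Cb; rw [if_neg]; omega

lemma cb_nat (a b : ℕ) : Cb a b = a.choose b := by
  by_cases h : b ≤ a
  · rw [Cb, if_pos ⟨by positivity, by exact_mod_cast h⟩]
    simp
  · rw [cb_zero (Or.inr (by exact_mod_cast not_le.mp h)),
      Nat.choose_eq_zero_of_lt (by omega)]
    simp

/-- Trinomial revision. -/
lemma cb_tri (a j k : ℤ) (hk : 0 ≤ k) :
    Cb j k * Cb a j = Cb a k * Cb (a - k) (j - k) := by
  by_cases h1 : k ≤ j
  · by_cases h2 : j ≤ a
    · have hj : 0 ≤ j := le_trans hk h1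
      have ha : 0 ≤ a := le_trans hj h2
      lift k to ℕ using hk
      lift j to ℕ using hj
      lift a to ℕ using ha
      have hkj : k ≤ j := by exact_mod_cast h1
      have hja : j ≤ a := by exact_mod_cast h2
      rw [show (a : ℤ) - k = ((a - k : ℕ) : ℤ) by omega,
        show (j : ℤ) - k = ((j - k : ℕ) : ℤ) by omega,
        cb_nat, cb_nat, cb_nat, cb_nat]
      rw [mul_comm]
      exact_mod_cast congrArg (Nat.cast : ℕ → ℚ) (Nat.choose_mul (n := a) hkj)
    · rw [show Cb a j = 0 from cb_zero (Or.inr (by omega)), mul_zero]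
      by_cases h3 : k ≤ a
      · rw [show Cb (a - k) (j - k) = 0 from
          cb_zero (Or.inr (show a - k < j - k by omega)), mul_zero]
      · rw [show Cb a k = 0 from cb_zero (Or.inr (by omega)), zero_mul]
  · rw [cb_zero (Or.inr (by omega)), zero_mul,
      cb_zero (Or.inl (show j - k < 0 by omega)), mul_zero]

lemma sum_Icc_int_cast (M : ℕ) (f : ℤ → ℚ) :
    ∑ m ∈ Finset.Icc (0 : ℤ) (M : ℤ), f m = ∑ p ∈ Finset.range (M + 1), f p := by
  rw [show Finset.Icc (0 : ℤ) (M : ℤ)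
      = (Finset.range (M + 1)).image (fun p : ℕ => (p : ℤ)) by
    ext x
    simp only [Finset.mem_Icc, Finset.mem_image, Finset.mem_range]
    constructor
    · rintro ⟨h1, h2⟩; exact ⟨x.toNat, by omega, by omega⟩
    · rintro ⟨p, hp, rfl⟩; omega]
  rw [Finset.sum_image (by intro x _ y _ h; exact_mod_cast (show (x : ℤ) = y from h))]

/-- Vandermonde for `Cb`. -/
lemma cb_vand (A b C N : ℤ) (hA : 0 ≤ A) (hb : 0 ≤ b) (hN : A ≤ N) :
    ∑ m ∈ Finset.Icc (0 : ℤ) N, Cb A m * Cb b (C - m) = Cb (A + b) C := by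
  by_cases hC : 0 ≤ C
  · by_cases hCab : C ≤ A + b
    · lift A to ℕ using hA
      lift b to ℕ using hb
      lift C to ℕ using hC
      have hCab' : C ≤ A + b := by exact_mod_cast hCab
      -- restrict the sum to Icc 0 (min A C)
      have hsub : Finset.Icc (0 : ℤ) ((min A C : ℕ) : ℤ) ⊆ Finset.Icc (0 : ℤ) N := by
        apply Finset.Icc_subset_Icc_right
        have : ((min A C : ℕ) : ℤ) ≤ (A : ℤ) := by exact_mod_cast Nat.min_le_left A C
        omega
      rw [← Finset.sum_subset hsub (by
        intro x hx hx'
        simp only [Finset.mem_Icc] at hx hx'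
        have : ((min A C : ℕ) : ℤ) < x := by
          by_contra h
          exact hx' ⟨hx.1, by omega⟩
        rcases lt_or_ge (A : ℤ) x with h | h
        · rw [cb_zero (Or.inr h), zero_mul]
        · rw [cb_zero (Or.inl (show (C : ℤ) - x < 0 by
            simp only [Nat.cast_min] at this; omega)), mul_zero])]
      rw [sum_Icc_int_cast]
      have key : ∀ p ∈ Finset.range (min A C + 1),
          Cb A p * Cb b ((C : ℤ) - p) = ((A.choose p * b.choose (C - p) : ℕ) : ℚ) := by
        intro p hp
        simp only [Finset.mem_range] at hp
        have hpA : p ≤ A := by omega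
        have hpC : p ≤ C := by omega
        rw [show (C : ℤ) - p = ((C - p : ℕ) : ℤ) by omega, cb_nat, cb_nat]
        push_cast
        ring
      rw [Finset.sum_congr rfl key]
      rw [show (A : ℤ) + b = ((A + b : ℕ) : ℤ) by push_cast; ring, cb_nat]
      rw [← Nat.cast_sum]
      congr 1
      have := Nat.add_choose_eq A b C
      rw [this, Finset.Nat.sum_antidiagonal_eq_sum_range_succ_mk]
      have hm1 : min A C ≤ A := Nat.min_le_left A C
      have hm2 : min A C ≤ C := Nat.min_le_right A C
      have hm3 : min A C = A ∨ min A C = C := min_choice A C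
      apply Finset.sum_subset
      · intro x hx
        simp only [Finset.mem_range] at hx ⊢
        omega
      · intro x hx hx'
        simp only [Finset.mem_range] at hx hx'
        rw [Nat.choose_eq_zero_of_lt (by rcases hm3 with h | h <;> omega), zero_mul]
    · rw [cb_zero (Or.inr (by omega))]
      apply Finset.sum_eq_zero
      intro m hm
      simp only [Finset.mem_Icc] at hm
      rcases lt_or_ge A m with h | h
      · rw [cb_zero (Or.inr h), zero_mul]
      · rw [cb_zero (Or.inr (show b < C - m by omega)), mul_zero]
  · rw [cb_zero (Or.inl (by omega))]
    apply Finset.sum_eq_zero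
    intro m hm
    simp only [Finset.mem_Icc] at hm
    rw [cb_zero (Or.inl (show C - m < 0 by omega)), mul_zero]

lemma cb_main (a b c k N : ℤ) (hk : 0 ≤ k) (hb : 0 ≤ b) (hN : a ≤ N) :
    ∑ j ∈ Finset.Icc k N, Cb j k * (Cb a j * Cb b (c - j))
      = Cb a k * Cb (a + b - k) (c - k) := by
  by_cases hka : k ≤ a
  · have step : ∀ j ∈ Finset.Icc k N,
        Cb j k * (Cb a j * Cb b (c - j)) = Cb a k * (Cb (a - k) (j - k) * Cb b (c - j)) := by
      intro j _
      rw [← mul_assoc, cb_tri a j k hk, mul_assoc]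
    rw [Finset.sum_congr rfl step, ← Finset.mul_sum]
    congr 1
    rw [show Finset.Icc k N = (Finset.Icc (0 : ℤ) (N - k)).map (addRightEmbedding k) by
      rw [Finset.map_add_right_Icc]; congr 1 <;> ring]
    rw [Finset.sum_map]
    simp only [addRightEmbedding_apply]
    have : ∀ m ∈ Finset.Icc (0 : ℤ) (N - k),
        Cb (a - k) (m + k - k) * Cb b (c - (m + k))
          = Cb (a - k) m * Cb b ((c - k) - m) := by
      intro m _
      congr 1 <;> congr 1 <;> ring
    rw [Finset.sum_congr rfl this, cb_vand (a - k) b (c - k) (N - k) (by omega) hb (by omega)]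
    congr 1
    ring
  · rw [cb_zero (Or.inr (by omega)), zero_mul]
    apply Finset.sum_eq_zero
    intro j hj
    simp only [Finset.mem_Icc] at hj
    rw [cb_zero (Or.inr (show a < j by omega)), zero_mul, mul_zero]

/-- For `1 ≤ i ≤ n-1` and `k ≥ 0`:
`Σ_{j=k}^{⌊n/2⌋} C(j,k)[C(n-i,j)C(i-1,i-j) - C(n-i-1,j)C(i,i+1-j)]
  = C(n-i,k)C(n-k-1,i-k) - C(n-i-1,k)C(n-k-1,i+1-k)`. -/
theorem stmt11 (n i k : ℤ) (hi1 : 1 ≤ i) (hi2 : i ≤ n - 1) (hk : 0 ≤ k) :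
    ∑ j ∈ Finset.Icc k (n / 2),
        Cb j k * (Cb (n - i) j * Cb (i - 1) (i - j) - Cb (n - i - 1) j * Cb i (i + 1 - j))
      = Cb (n - i) k * Cb (n - k - 1) (i - k)
        - Cb (n - i - 1) k * Cb (n - k - 1) (i + 1 - k) := by
  have hsub : Finset.Icc k (n / 2) ⊆ Finset.Icc k n :=
    Finset.Icc_subset_Icc_right (by omega)
  rw [Finset.sum_subset hsub (by
    intro j hj hj'
    simp only [Finset.mem_Icc] at hj hj'
    have h2j : n < 2 * j := by omega
    have e1 : Cb (n - i) j * Cb (i - 1) (i - j) = 0 := by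
      rcases lt_or_ge (n - i) j with h | h
      · rw [cb_zero (Or.inr h), zero_mul]
      · rw [cb_zero (Or.inl (show i - j < 0 by omega)), mul_zero]
    have e2 : Cb (n - i - 1) j * Cb i (i + 1 - j) = 0 := by
      rcases lt_or_ge (n - i - 1) j with h | h
      · rw [cb_zero (Or.inr h), zero_mul]
      · rw [cb_zero (Or.inl (show i + 1 - j < 0 by omega)), mul_zero]
    rw [e1, e2, sub_zero, mul_zero])]
  simp only [mul_sub]
  rw [Finset.sum_sub_distrib]
  have h1 := cb_main (n - i) (i - 1) i k n hk (by omega) (by omega)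
  have h2 := cb_main (n - i - 1) i (i + 1) k n hk (by omega) (by omega)
  rw [show n - i + (i - 1) - k = n - k - 1 by ring] at h1
  rw [show n - i - 1 + i - k = n - k - 1 by ring] at h2
  rw [h1, h2]
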